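/- Let d ≥ 1, 1 ≤ N ≤ d, A : (N-subsets of Fin d) → ℂ with ∑_S |A(S)|² = 1, and c : Fin d → ℂ with ∑_k |c(k)|² = 1. With A(T ∪ {k}) := 0 when k ∈ T, one has ∑_{T : (N−1)-subsets} |∑_k conj(A(T ∪ {k})) c(k)|² ≤ (d − N + 1) · ∑_{S : N-subsets} |A(S)|² · ∑_{k ∈ S} |c(k)|², which equals (d−N+1) − (d−N+1) · ∑_S |A(S)|² ∑_{k∉S} |c(k)|². -/

import Mathlib

open Finset

theorem stmt2 (d N : ℕ) (hd : 1 ≤ d) (hN1 : 1 ≤ N) (hNd : N ≤ d)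
    (A : Finset (Fin d) → ℂ)
    (hA : ∑ S ∈ Finset.powersetCard N (Finset.univ : Finset (Fin d)),
        ‖A S‖ ^ 2 = 1)
    (c : Fin d → ℂ) (hc : ∑ k, ‖c k‖ ^ 2 = 1) :
    (∑ T ∈ Finset.powersetCard (N - 1) (Finset.univ : Finset (Fin d)),
      ‖∑ k, (starRingEnd ℂ) (if k ∈ T then 0 else A (insert k T)) * c k‖ ^ 2
      ≤ ((d : ℝ) - N + 1) *
        ∑ S ∈ Finset.powersetCard N (Finset.univ : Finset (Fin d)),
          ‖A S‖ ^ 2 * ∑ k ∈ S, ‖c k‖ ^ 2) ∧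
    (((d : ℝ) - N + 1) *
        ∑ S ∈ Finset.powersetCard N (Finset.univ : Finset (Fin d)),
          ‖A S‖ ^ 2 * ∑ k ∈ S, ‖c k‖ ^ 2
      = ((d : ℝ) - N + 1) - ((d : ℝ) - N + 1) *
        ∑ S ∈ Finset.powersetCard N (Finset.univ : Finset (Fin d)),
          ‖A S‖ ^ 2 * ∑ k ∈ (Finset.univ : Finset (Fin d)) \ S,
            ‖c k‖ ^ 2) := by
  have hcast : ((d : ℝ) - N + 1) = ((d - (N - 1) : ℕ) : ℝ) := by
    have h : N - 1 ≤ d := by omega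
    rw [Nat.cast_sub h, Nat.cast_sub hN1]
    push_cast
    ring
  constructor
  · -- First inequality
    have key : ∀ T ∈ Finset.powersetCard (N - 1) (Finset.univ : Finset (Fin d)),
        ‖∑ k, (starRingEnd ℂ) (if k ∈ T then 0 else A (insert k T)) * c k‖ ^ 2
        ≤ ((d : ℝ) - N + 1) *
          ∑ k ∈ (Finset.univ : Finset (Fin d)) \ T,
            ‖A (insert k T)‖ ^ 2 * ‖c k‖ ^ 2 := by
      intro T hT
      have hTc : T.card = N - 1 := (Finset.mem_powersetCard.mp hT).2
      have hsum : ∑ k, (starRingEnd ℂ) (if k ∈ T then 0 else A (insert k T)) * c k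
          = ∑ k ∈ (Finset.univ : Finset (Fin d)) \ T,
              (starRingEnd ℂ) (A (insert k T)) * c k := by
        rw [← Finset.sum_subset (Finset.subset_univ ((Finset.univ : Finset (Fin d)) \ T))]
        · exact Finset.sum_congr rfl fun k hk => by
            rw [Finset.mem_sdiff] at hk; simp [hk.2]
        · intro k _ hk
          simp only [Finset.mem_sdiff, Finset.mem_univ, true_and, not_not] at hk
          simp [hk]
      rw [hsum]
      have h1 : ‖∑ k ∈ (Finset.univ : Finset (Fin d)) \ T,
          (starRingEnd ℂ) (A (insert k T)) * c k‖
          ≤ ∑ k ∈ (Finset.univ : Finset (Fin d)) \ T,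
            ‖A (insert k T)‖ * ‖c k‖ := by
        refine (norm_sum_le _ _).trans (le_of_eq ?_)
        exact Finset.sum_congr rfl fun k _ => by
          rw [norm_mul, Complex.norm_conj]
      have h2 : ‖∑ k ∈ (Finset.univ : Finset (Fin d)) \ T,
          (starRingEnd ℂ) (A (insert k T)) * c k‖ ^ 2
          ≤ (∑ k ∈ (Finset.univ : Finset (Fin d)) \ T,
            ‖A (insert k T)‖ * ‖c k‖) ^ 2 := by
        exact pow_le_pow_left₀ (norm_nonneg _) h1 2
      refine h2.trans ?_
      have h3 := sq_sum_le_card_mul_sum_sq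
        (s := (Finset.univ : Finset (Fin d)) \ T)
        (f := fun k => ‖A (insert k T)‖ * ‖c k‖)
      have hcard : ((Finset.univ : Finset (Fin d)) \ T).card = d - (N - 1) := by
        rw [Finset.card_sdiff_of_subset (Finset.subset_univ T), hTc]
        simp
      rw [hcard] at h3
      refine h3.trans (le_of_eq ?_)
      rw [hcast]
      congr 1
      exact Finset.sum_congr rfl fun k _ => by ring
    refine (Finset.sum_le_sum key).trans (le_of_eq ?_)
    rw [← Finset.mul_sum]
    congr 1
    simp_rw [Finset.mul_sum]
    -- reindex pairs (T, k) with k ∉ T ↔ (S, k) with k ∈ S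
    rw [Finset.sum_sigma', Finset.sum_sigma'
      (s := Finset.powersetCard N (Finset.univ : Finset (Fin d)))]
    refine Finset.sum_nbij' (i := fun p => ⟨insert p.2 p.1, p.2⟩)
      (j := fun p => ⟨p.1.erase p.2, p.2⟩) ?_ ?_ ?_ ?_ ?_
    · rintro ⟨T, k⟩ hp
      simp only [Finset.mem_sigma, Finset.mem_powersetCard, Finset.mem_sdiff,
        Finset.mem_univ, true_and] at hp ⊢
      refine ⟨⟨Finset.subset_univ _, ?_⟩, Finset.mem_insert_self _ _⟩
      rw [Finset.card_insert_of_notMem hp.2, hp.1.2]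
      omega
    · rintro ⟨S, k⟩ hp
      simp only [Finset.mem_sigma, Finset.mem_powersetCard, Finset.mem_sdiff,
        Finset.mem_univ, true_and] at hp ⊢
      refine ⟨⟨Finset.subset_univ _, ?_⟩, Finset.notMem_erase _ _⟩
      rw [Finset.card_erase_of_mem hp.2, hp.1.2]
    · rintro ⟨T, k⟩ hp
      simp only [Finset.mem_sigma, Finset.mem_powersetCard, Finset.mem_sdiff,
        Finset.mem_univ, true_and] at hp
      simp [Finset.erase_insert hp.2]
    · rintro ⟨S, k⟩ hp
      simp only [Finset.mem_sigma, Finset.mem_powersetCard, Finset.mem_sdiff,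
        Finset.mem_univ, true_and] at hp
      simp [Finset.insert_erase hp.2]
    · rintro ⟨T, k⟩ _
      rfl
  · -- Second equality
    have h1 : ∀ S : Finset (Fin d),
        ∑ k ∈ S, ‖c k‖ ^ 2
          = 1 - ∑ k ∈ (Finset.univ : Finset (Fin d)) \ S, ‖c k‖ ^ 2 := by
      intro S
      have := Finset.sum_sdiff (f := fun k => ‖c k‖ ^ 2) (Finset.subset_univ S)
      rw [hc] at this
      linarith
    have h2 : ∑ S ∈ Finset.powersetCard N (Finset.univ : Finset (Fin d)),
        ‖A S‖ ^ 2 * ∑ k ∈ S, ‖c k‖ ^ 2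
        = 1 - ∑ S ∈ Finset.powersetCard N (Finset.univ : Finset (Fin d)),
          ‖A S‖ ^ 2 * ∑ k ∈ (Finset.univ : Finset (Fin d)) \ S,
            ‖c k‖ ^ 2 := by
      rw [← hA, ← Finset.sum_sub_distrib]
      exact Finset.sum_congr rfl fun S _ => by rw [h1 S]; ring
    rw [h2]
    ring
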